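/- Consider a generic linear program: X is a polytope in R^d (the convex hull of a nonempty finite set of points), g(x) = <c, x> + b is an affine function, and g attains its minimum over X at a unique point x*. Then x* is a sharp minimum: there exists gamma > 0 such that g(x) >= g(x*) + gamma * ||x - x*|| for all x in X. -/

import Mathlib

open scoped RealInnerProductSpace

/-- The (necessarily unique) solution of a generic linear program is sharp:
if `X` is a polytope, `g(x) = ⟪c, x⟫ + b` is affine, and `g` attains its minimum over `X`
at a unique point `x*`, then there is `γ > 0` with `g(x) ≥ g(x*) + γ‖x - x*‖` on `X`. -/
theorem generic_linear_program_sharp_minimum {d : ℕ}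
    (S : Finset (EuclideanSpace ℝ (Fin d))) (hS : S.Nonempty)
    (X : Set (EuclideanSpace ℝ (Fin d))) (hX : X = convexHull ℝ (S : Set (EuclideanSpace ℝ (Fin d))))
    (c : EuclideanSpace ℝ (Fin d)) (b : ℝ)
    (g : EuclideanSpace ℝ (Fin d) → ℝ) (hg : ∀ x, g x = ⟪c, x⟫ + b)
    (xstar : EuclideanSpace ℝ (Fin d)) (hxstar : xstar ∈ X)
    (hmin : ∀ x ∈ X, g xstar ≤ g x)
    (hunique : ∀ x ∈ X, x ≠ xstar → g xstar < g x) :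
    ∃ γ > 0, ∀ x ∈ X, g xstar + γ * ‖x - xstar‖ ≤ g x := by
  classical
  set T : Finset (EuclideanSpace ℝ (Fin d)) := S.filter (· ≠ xstar) with hT
  -- each vertex of S is in X
  have hSX : ∀ s ∈ S, s ∈ X := fun s hs => hX ▸ subset_convexHull ℝ _ hs
  by_cases hTne : T.Nonempty
  · set γ : ℝ := T.inf' hTne (fun s => (g s - g xstar) / ‖s - xstar‖) with hγdef
    have hpos : ∀ s ∈ T, 0 < (g s - g xstar) / ‖s - xstar‖ := by
      intro s hsT
      rw [hT, Finset.mem_filter] at hsT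
      have h1 : g xstar < g s := hunique s (hSX s hsT.1) hsT.2
      have h2 : (0:ℝ) < ‖s - xstar‖ := by
        rw [norm_pos_iff]
        exact sub_ne_zero.mpr hsT.2
      exact div_pos (by linarith) h2
    have hγpos : 0 < γ := by
      rw [hγdef, Finset.lt_inf'_iff]
      exact hpos
    refine ⟨γ, hγpos, ?_⟩
    -- the function f is concave
    have hconc : ConcaveOn ℝ Set.univ
        (fun x => g x - g xstar - γ * ‖x - xstar‖) := by
      have h1 : ConcaveOn ℝ Set.univ (fun x => g x - g xstar) := by
        constructor
        · exact convex_univ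
        · intro x _ y _ a bb ha hb hab
          have hbb : bb = 1 - a := by linarith
          subst hbb
          simp only [smul_eq_mul, hg, inner_add_right, real_inner_smul_right]
          apply le_of_eq; ring
      have h2 : ConvexOn ℝ Set.univ (fun x => γ * ‖x - xstar‖) := by
        have := (convexOn_dist xstar (convex_univ (E := EuclideanSpace ℝ (Fin d)))).smul
          (le_of_lt hγpos)
        simpa [dist_eq_norm, smul_eq_mul] using this
      have := h1.sub h2
      exact this
    -- f ≥ 0 on S
    have hfS : ∀ s ∈ (S : Set (EuclideanSpace ℝ (Fin d))),
        (0:ℝ) ≤ g s - g xstar - γ * ‖s - xstar‖ := by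
      intro s hs
      by_cases hsx : s = xstar
      · simp [hsx]
      · have hsT : s ∈ T := by rw [hT, Finset.mem_filter]; exact ⟨hs, hsx⟩
        have hγle : γ ≤ (g s - g xstar) / ‖s - xstar‖ := Finset.inf'_le _ hsT
        have hnpos : (0:ℝ) < ‖s - xstar‖ := by
          rw [norm_pos_iff]; exact sub_ne_zero.mpr hsx
        have := (le_div_iff₀ hnpos).mp hγle
        linarith
    intro x hx
    rw [hX] at hx
    obtain ⟨y, hy, hyx⟩ := hconc.exists_le_of_mem_convexHull
      (Set.subset_univ _) hx
    have := hfS y hy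
    linarith
  · -- S ⊆ {xstar}, so X = {xstar}
    refine ⟨1, one_pos, ?_⟩
    intro x hx
    have hSsub : (S : Set (EuclideanSpace ℝ (Fin d))) ⊆ {xstar} := by
      intro s hs
      by_contra hne
      exact hTne ⟨s, by rw [hT, Finset.mem_filter]; exact ⟨hs, hne⟩⟩
    have : x ∈ convexHull ℝ ({xstar} : Set (EuclideanSpace ℝ (Fin d))) := by
      rw [hX] at hx
      exact convexHull_mono hSsub hx
    rw [convexHull_singleton, Set.mem_singleton_iff] at this
    subst this
    simp
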